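/- Let Γ be a finite directed graph in which any two distinct cycles have no common vertex. Then every path p in Γ can be written as a concatenation p = p₁′ p₁ p₂′ p₂ ⋯ p_k p_{k+1}′, where C₁ ⟹ C₂ ⟹ ⋯ ⟹ C_k is a chain of cycles (possibly k = 0), each p_i is a (possibly empty) path all of whose edges belong to the cycle C_i, and each p_i′ is a (possibly empty) path all of whose edges belong to no cycle of Γ. -/

import Mathlib

open scoped BigOperators

section LeavittSetup

variable {V E : Type}

/-- Generators of the Leavitt path algebra of a graph: vertices, edges, and ghost (star) edges. -/
inductive LGen (V E : Type) : Type
  | vert : V → LGen V E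
  | edge : E → LGen V E
  | star : E → LGen V E

variable (F : Type) [Field F]

/-- The vertex generator inside the free algebra. -/
noncomputable def gvert (v : V) : FreeAlgebra F (LGen V E) := FreeAlgebra.ι F (LGen.vert v)

/-- The edge generator inside the free algebra. -/
noncomputable def gedge (e : E) : FreeAlgebra F (LGen V E) := FreeAlgebra.ι F (LGen.edge e)

/-- The ghost edge generator `e*` inside the free algebra. -/
noncomputable def gstar (e : E) : FreeAlgebra F (LGen V E) := FreeAlgebra.ι F (LGen.star e)

variable (s r : E → V)

/-- The defining relations of the Leavitt path algebra of the graph `(V, E, s, r)`: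
(1) `v * w = δ_{v,w} v`; (2) `s(e) e = e = e r(e)` and `r(e) e* = e* = e* s(e)`;
(3) `e* f = δ_{e,f} r(e)`; (4) `v = ∑_{s(e) = v} e e*` for every non-sink `v`
(the sum makes sense whenever `v` emits finitely many edges, in particular for a
row-finite graph). -/
inductive LeavittRel : FreeAlgebra F (LGen V E) → FreeAlgebra F (LGen V E) → Prop
  | vertSelf (v : V) : LeavittRel (gvert F v * gvert F v) (gvert F v)
  | vertNe {v w : V} (h : v ≠ w) : LeavittRel (gvert F v * gvert F w) 0
  | edgeSource (e : E) : LeavittRel (gvert F (s e) * gedge F e) (gedge F e)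
  | edgeRange (e : E) : LeavittRel (gedge F e * gvert F (r e)) (gedge F e)
  | starRange (e : E) : LeavittRel (gvert F (r e) * gstar F e) (gstar F e)
  | starSource (e : E) : LeavittRel (gstar F e * gvert F (s e)) (gstar F e)
  | starEdgeSelf (e : E) : LeavittRel (gstar F e * gedge F e) (gvert F (r e))
  | starEdgeNe {e f : E} (h : e ≠ f) : LeavittRel (gstar F e * gedge F f) 0
  | ck (v : V) (h : {e : E | s e = v}.Finite) (hne : ∃ e, s e = v) :
      LeavittRel (gvert F v) (∑ e ∈ h.toFinset, gedge F e * gstar F e)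

/-- The Leavitt path algebra `L(Γ)` of the graph `Γ = (V, E, s, r)` over the field `F`,
presented as the quotient of the free algebra on the generators by the Leavitt relations. -/
noncomputable abbrev LeavittPathAlgebra := RingQuot (LeavittRel F s r)

/-- The image of a vertex in the Leavitt path algebra. -/
noncomputable def lvert (v : V) : LeavittPathAlgebra F s r :=
  RingQuot.mkAlgHom F (LeavittRel F s r) (gvert F v)

/-- The image of an edge in the Leavitt path algebra. -/
noncomputable def ledge (e : E) : LeavittPathAlgebra F s r :=
  RingQuot.mkAlgHom F (LeavittRel F s r) (gedge F e)

/-- The image of a ghost edge `e*` in the Leavitt path algebra. -/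
noncomputable def lstar (e : E) : LeavittPathAlgebra F s r :=
  RingQuot.mkAlgHom F (LeavittRel F s r) (gstar F e)

/-- The element of the Leavitt path algebra given by a path `p = e₁ ⋯ eₙ` (a list of edges). -/
noncomputable def lpath (p : List E) : LeavittPathAlgebra F s r := (p.map (ledge F s r)).prod

/-- The element `p* = eₙ* ⋯ e₁*` of the Leavitt path algebra given by a path `p = e₁ ⋯ eₙ`. -/
noncomputable def lpathStar (p : List E) : LeavittPathAlgebra F s r :=
  (p.reverse.map (lstar F s r)).prod

/-- A list of edges is a path when the range of each edge is the source of the next. -/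
def IsPath (s r : E → V) (p : List E) : Prop := List.Chain' (fun e f => r e = s f) p

/-- A nonempty path starts at the source of its first edge. -/
def StartsAt (s : E → V) (p : List E) (v : V) : Prop := ∃ e, p.head? = some e ∧ s e = v

/-- A nonempty path ends at the range of its last edge. -/
def EndsAt (r : E → V) (p : List E) (v : V) : Prop := ∃ e, p.getLast? = some e ∧ r e = v

/-- A (nonempty) closed path: it starts and ends at the same vertex. -/
def IsClosedPath (s r : E → V) (p : List E) : Prop := ∃ v, StartsAt s p v ∧ EndsAt r p v

/-- A cycle: a closed path whose source vertices are pairwise distinct.  A cycle is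
identified with the subgraph it spans, i.e. with its set of edges `{e | e ∈ p}`. -/
def IsCycle (s r : E → V) (p : List E) : Prop :=
  IsPath s r p ∧ IsClosedPath s r p ∧ (p.map s).Nodup

/-- The vertex set `V(C)` of a cycle (the sources of its edges). -/
def cycleVerts (s : E → V) (c : List E) : Set V := {v | ∃ e ∈ c, s e = v}

/-- `C ⟹ C'`: some (possibly empty) path starts at a vertex of `C` and ends at a
vertex of `C'`. -/
def CycleConnects (s r : E → V) (c c' : List E) : Prop :=
  ∃ v w, v ∈ cycleVerts s c ∧ w ∈ cycleVerts s c' ∧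
    (v = w ∨ ∃ p, p ≠ [] ∧ IsPath s r p ∧ StartsAt s p v ∧ EndsAt r p w)

/-- A chain of cycles `C₁ ⟹ C₂ ⟹ ⋯ ⟹ C_k`: pairwise distinct cycles, each connected
to the next; its length is the number of cycles. -/
def IsChainOfCycles (s r : E → V) (cs : List (List E)) : Prop :=
  (∀ c ∈ cs, IsCycle s r c) ∧ List.Chain' (CycleConnects s r) cs ∧
    List.Pairwise (fun c c' => {e | e ∈ c} ≠ {e | e ∈ c'}) cs

/-- A cycle has an exit if some edge starts at a vertex of the cycle but is not an
edge of the cycle. -/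
def HasExit (s : E → V) (c : List E) : Prop := ∃ e, s e ∈ cycleVerts s c ∧ e ∉ c

/-- A chain of cycles with an exit: the last cycle of the chain has an exit. -/
def ChainWithExit (s r : E → V) (cs : List (List E)) : Prop :=
  IsChainOfCycles s r cs ∧ ∃ c, cs.getLast? = some c ∧ HasExit s c

/-- Any two distinct cycles of the graph have no common vertex: two cycles sharing a
vertex coincide (have the same edge set). -/
def SeparatedCycles (s r : E → V) : Prop :=
  ∀ c c', IsCycle s r c → IsCycle s r c' →
    (cycleVerts s c ∩ cycleVerts s c').Nonempty → {e | e ∈ c} = {e | e ∈ c'}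

/-- `W + W² + ⋯ + Wⁿ` for a subspace `W` of an `F`-algebra. -/
noncomputable def powsSum {A : Type} [Semiring A] [Algebra F A]
    (W : Submodule F A) (n : ℕ) : Submodule F A :=
  ∑ i ∈ Finset.Icc 1 n, W ^ i


/- ### Auxiliary lemmas for the path decomposition -/

lemma isPath_infix {p q : List E} (hq : IsPath s r q) (h : p <:+: q) : IsPath s r p :=
  List.IsChain.infix hq h

lemma startsAt_cons (e : E) (l : List E) : StartsAt s (e :: l) (s e) := ⟨e, rfl, rfl⟩

lemma getLast?_append_of_ne_nil {l₁ l₂ : List E} (h : l₂ ≠ []) :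
    (l₁ ++ l₂).getLast? = l₂.getLast? := by
  rw [List.getLast?_append]
  obtain ⟨e, he⟩ : ∃ e, l₂.getLast? = some e := by
    cases hl : l₂.getLast? with
    | none => exact absurd (List.getLast?_eq_none_iff.mp hl) h
    | some e => exact ⟨e, rfl⟩
  rw [he]; rfl

lemma exists_getLast?_eq {α : Type*} {l : List α} (h : l ≠ []) : ∃ e, l.getLast? = some e := by
  cases hl : l.getLast? with
  | none => exact absurd (List.getLast?_eq_none_iff.mp hl) h
  | some e => exact ⟨e, rfl⟩

lemma endsAt_append_right {l₁ l₂ : List E} {v : V} (h : EndsAt r l₂ v) :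
    EndsAt r (l₁ ++ l₂) v := by
  obtain ⟨e, he, hre⟩ := h
  refine ⟨e, ?_, hre⟩
  rw [List.getLast?_append, he]; rfl

/-- From a path `l₁ ++ l₂`, the range of the last edge of `l₁` is the source of the
first edge of `l₂`. -/
lemma path_junction {l₁ l₂ : List E} (h : IsPath s r (l₁ ++ l₂)) {e f : E}
    (he : l₁.getLast? = some e) (hf : l₂.head? = some f) : r e = s f :=
  (List.isChain_append.mp h).2.2 e he f hf

/-- If `q ++ [g]` is a prefix of a path and `q ≠ []`, then `q` ends at `s g`. -/
lemma endsAt_of_prefix {p q : List E} {g : E} (hp : IsPath s r p)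
    (hpre : (q ++ [g]) <+: p) (hq : q ≠ []) : EndsAt r q (s g) := by
  have h2 : IsPath s r (q ++ [g]) := isPath_infix s r hp hpre.isInfix
  obtain ⟨e, he⟩ := exists_getLast?_eq hq
  exact ⟨e, he, path_junction s r h2 he rfl⟩

/-- The range of any edge of a cycle is a vertex of the cycle. -/
lemma range_mem_cycleVerts {c : List E} (hc : IsCycle s r c) {e : E} (he : e ∈ c) :
    r e ∈ cycleVerts s c := by
  obtain ⟨a, b, rfl⟩ := List.append_of_mem he
  cases b with
  | cons g b' =>
    have hp : IsPath s r (e :: g :: b') :=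
      isPath_infix s r hc.1 ⟨a, [], by simp⟩
    exact ⟨g, by simp, ((List.isChain_cons_cons).mp hp).1.symm⟩
  | nil =>
    obtain ⟨v₀, ⟨e₀, h₀, h₀s⟩, ⟨e₁, h₁, h₁r⟩⟩ := hc.2.1
    have hlast : (a ++ [e]).getLast? = some e := by
      rw [getLast?_append_of_ne_nil (by simp)]; rfl
    have he1 : e₁ = e := by rw [hlast] at h₁; exact (Option.some_inj.mp h₁).symm
    have he0 : e₀ ∈ a ++ [e] := List.mem_of_mem_head? h₀
    exact ⟨e₀, he0, by rw [h₀s, ← he1, h₁r]⟩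

/-- Between any two vertices of a cycle there is a path (or they coincide). -/
lemma cycle_path_between {c : List E} (hc : IsCycle s r c) {v w : V}
    (hv : v ∈ cycleVerts s c) (hw : w ∈ cycleVerts s c) :
    v = w ∨ ∃ q, q ≠ [] ∧ IsPath s r q ∧ StartsAt s q v ∧ EndsAt r q w := by
  obtain ⟨e₁, he₁, rfl⟩ := hv
  obtain ⟨e₂, he₂, rfl⟩ := hw
  obtain ⟨a, b, rfl⟩ := List.append_of_mem he₁
  by_cases h2 : e₂ ∈ e₁ :: b
  · obtain ⟨x, y, hxy⟩ := List.append_of_mem h2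
    cases x with
    | nil =>
      left; simp only [List.nil_append, List.cons.injEq] at hxy
      rw [hxy.1]
    | cons x₀ x' =>
      right
      have hx0 : x₀ = e₁ := by
        have := hxy; simp only [List.cons_append, List.cons.injEq] at this
        exact this.1.symm
      have hinf : (x₀ :: x') ++ e₂ :: y <:+: a ++ e₁ :: b := ⟨a, [], by rw [hxy]; simp⟩
      have hpxy : IsPath s r ((x₀ :: x') ++ e₂ :: y) := isPath_infix s r hc.1 hinf
      refine ⟨x₀ :: x', by simp, isPath_infix s r hpxy ⟨[], e₂ :: y, by simp⟩, ?_, ?_⟩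
      · exact ⟨x₀, rfl, by rw [hx0]⟩
      · obtain ⟨e, he⟩ := exists_getLast?_eq (l := x₀ :: x') (by simp)
        exact ⟨e, he, path_junction s r hpxy he rfl⟩
  · have h2a : e₂ ∈ a := by
      rcases List.mem_append.mp he₂ with h | h
      · exact h
      · exact absurd h h2
    obtain ⟨x, y, hxy⟩ := List.append_of_mem h2a
    right
    obtain ⟨v₀, ⟨e₀, h₀, h₀s⟩, ⟨eL, hL, hLr⟩⟩ := hc.2.1
    have ha_ne : a ≠ [] := by rw [hxy]; simp
    have hhead : (a ++ e₁ :: b).head? = a.head? := by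
      cases a with
      | nil => exact absurd rfl ha_ne
      | cons a₀ a' => rfl
    have he0a : e₀ ∈ a := by
      have : a.head? = some e₀ := by rw [← hhead]; exact h₀
      exact List.mem_of_mem_head? this
    have hlastc : (a ++ e₁ :: b).getLast? = (e₁ :: b).getLast? :=
      getLast?_append_of_ne_nil (by simp)
    have hLb : (e₁ :: b).getLast? = some eL := by rw [← hlastc]; exact hL
    refine ⟨(e₁ :: b) ++ x, by simp, ?_, ⟨e₁, rfl, rfl⟩, ?_⟩
    · -- IsPath ((e₁ :: b) ++ x)
      rw [IsPath, List.Chain', List.isChain_append]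
      refine ⟨isPath_infix s r hc.1 ⟨a, [], by simp⟩,
        isPath_infix s r hc.1 ⟨[], e₂ :: y ++ e₁ :: b, by rw [hxy]; simp⟩, ?_⟩
      intro z hz w hw
      have hz' : z = eL := by rw [hLb] at hz; exact (Option.some_inj.mp hz).symm
      have hw' : s w = v₀ := by
        have hva : a.head? = some w := by
          rw [hxy]; cases x with
          | nil => simp at hw
          | cons x₀ x' =>
            obtain rfl : x₀ = w := Option.some_inj.mp hw
            rfl
        have : w = e₀ := by
          rw [← hhead] at hva; rw [h₀] at hva; exact (Option.some_inj.mp hva).symm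
        rw [this, h₀s]
      rw [hz', hLr, hw']
    · -- EndsAt ((e₁ :: b) ++ x) (s e₂)
      cases x with
      | nil =>
        have he20 : e₂ = e₀ := by
          have : a.head? = some e₂ := by rw [hxy]; rfl
          rw [← hhead, h₀] at this
          exact (Option.some_inj.mp this).symm
        refine ⟨eL, by simpa using hLb, ?_⟩
        rw [hLr, he20, h₀s]
      | cons x₀ x' =>
        have hx_ne : (x₀ :: x') ≠ [] := by simp
        have hpfx : IsPath s r ((x₀ :: x') ++ [e₂]) := by
          refine isPath_infix s r hc.1 ⟨[], y ++ e₁ :: b, ?_⟩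
          rw [hxy]; simp
        obtain ⟨e, he⟩ := exists_getLast?_eq hx_ne
        refine ⟨e, ?_, path_junction s r hpfx he rfl⟩
        rw [getLast?_append_of_ne_nil hx_ne]; exact he

lemma exists_dup_split : ∀ (l : List E), ¬ (l.map s).Nodup →
    ∃ l₁ g l₂ h l₃, l = l₁ ++ g :: l₂ ++ h :: l₃ ∧ s g = s h := by
  intro l hl
  induction l with
  | nil => simp at hl
  | cons a t ih =>
    rw [List.map_cons, List.nodup_cons] at hl
    by_cases hmem : s a ∈ t.map s
    · obtain ⟨h', hh', hsh⟩ := List.mem_map.mp hmem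
      obtain ⟨l₂, l₃, rfl⟩ := List.append_of_mem hh'
      exact ⟨[], a, l₂, h', l₃, rfl, hsh.symm⟩
    · have hnd : ¬ (t.map s).Nodup := fun hn => hl ⟨hmem, hn⟩
      obtain ⟨l₁, g, l₂, h', l₃, rfl, hs⟩ := ih hnd
      exact ⟨a :: l₁, g, l₂, h', l₃, rfl, hs⟩

/-- Every closed path through an edge `f` yields a cycle containing `f`. -/
lemma closed_walk_cycle : ∀ (n : ℕ) (f : E) (q : List E), q.length ≤ n →
    IsPath s r (f :: q) → EndsAt r (f :: q) (s f) → ∃ c, IsCycle s r c ∧ f ∈ c := by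
  intro n
  induction n with
  | zero =>
    intro f q hlen hpath hend
    have hq : q = [] := List.length_eq_zero_iff.mp (Nat.le_zero.mp hlen)
    subst hq
    refine ⟨[f], ⟨hpath, ⟨s f, startsAt_cons s f [], hend⟩, by simp⟩, by simp⟩
  | succ n ih =>
    intro f q hlen hpath hend
    by_cases hnd : ((f :: q).map s).Nodup
    · exact ⟨f :: q, ⟨hpath, ⟨s f, startsAt_cons s f q, hend⟩, hnd⟩, by simp⟩
    · obtain ⟨l₁, g, l₂, h, l₃, heq, hs⟩ := exists_dup_split s (f :: q) hnd
      cases l₁ with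
      | nil =>
        obtain ⟨rfl, hq⟩ : f = g ∧ q = l₂ ++ h :: l₃ := by
          simpa using heq
        -- q = l₂ ++ h :: l₃, s f = s h
        have hpath' : IsPath s r (f :: l₂) := by
          refine isPath_infix s r hpath ⟨[], h :: l₃, by simp [hq]⟩
        have hend' : EndsAt r (f :: l₂) (s f) := by
          obtain ⟨e, he⟩ := exists_getLast?_eq (l := f :: l₂) (by simp)
          refine ⟨e, he, ?_⟩
          have hfull : IsPath s r ((f :: l₂) ++ (h :: l₃)) := by
            rw [show (f :: l₂) ++ (h :: l₃) = f :: q by simp [hq]]; exact hpath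
          rw [path_junction s r hfull he rfl, ← hs]
        have hlen' : l₂.length ≤ n := by
          have : q.length = l₂.length + l₃.length + 1 := by simp [hq]; omega
          omega
        exact ih f l₂ hlen' hpath' hend'
      | cons a l₁' =>
        obtain ⟨rfl, hq⟩ : f = a ∧ q = l₁' ++ g :: (l₂ ++ h :: l₃) := by
          simpa using heq
        -- q = l₁' ++ g :: l₂ ++ h :: l₃
        have hpath1 : IsPath s r ((f :: l₁') ++ (h :: l₃)) := by
          rw [IsPath, List.Chain', List.isChain_append]
          refine ⟨isPath_infix s r hpath ⟨[], g :: l₂ ++ h :: l₃, by simp [hq]⟩,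
            isPath_infix s r hpath ⟨f :: l₁' ++ g :: l₂, [], by simp [hq]⟩, ?_⟩
          intro z hz w hw
          have hw' : w = h := (Option.some_inj.mp hw).symm
          have hjun : IsPath s r ((f :: l₁') ++ (g :: (l₂ ++ h :: l₃))) := by
            rw [show (f :: l₁') ++ (g :: (l₂ ++ h :: l₃)) = f :: q by simp [hq]]
            exact hpath
          rw [hw', ← hs]
          exact path_junction s r hjun hz rfl
        have hend1 : EndsAt r ((f :: l₁') ++ (h :: l₃)) (s f) := by
          obtain ⟨e, he, hre⟩ := hend
          refine ⟨e, ?_, hre⟩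
          rw [getLast?_append_of_ne_nil (by simp)]
          have : (f :: q).getLast? = (h :: l₃).getLast? := by
            rw [show f :: q = (f :: l₁' ++ g :: l₂) ++ (h :: l₃) by simp [hq]]
            exact getLast?_append_of_ne_nil (by simp)
          rw [← this]; exact he
        have hlen1 : (l₁' ++ h :: l₃).length ≤ n := by
          have : q.length = l₁'.length + l₂.length + l₃.length + 2 := by simp [hq]; omega
          simp only [List.length_append, List.length_cons]
          omega
        have := ih f (l₁' ++ h :: l₃) hlen1 (by simpa using hpath1) (by simpa using hend1)
        exact this

lemma decomp_aux (hsep : SeparatedCycles s r) :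
    ∀ n (p : List E), p.length ≤ n → IsPath s r p →
    ∃ cs ps ps' : List (List E),
      IsChainOfCycles s r cs ∧
      ps.length = cs.length ∧
      ps'.length = cs.length + 1 ∧
      (∀ pc ∈ List.zip ps cs, IsPath s r pc.1 ∧ ∀ e ∈ pc.1, e ∈ pc.2) ∧
      (∀ q ∈ ps', IsPath s r q ∧ ∀ e ∈ q, ∀ c : List E, IsCycle s r c → e ∉ c) ∧
      p = (List.zipWith (· ++ ·) ps' (ps ++ [[]])).flatten ∧
      (∀ c' ∈ cs, ∃ q g, (q ++ [g]) <+: p ∧ g ∈ c') := by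
  intro n
  induction n with
  | zero =>
    intro p hlen hp
    have hpnil : p = [] := List.length_eq_zero_iff.mp (Nat.le_zero.mp hlen)
    subst hpnil
    refine ⟨[], [], [[]], ⟨by simp, List.isChain_nil, by simp⟩, rfl, rfl, by simp, ?_, by simp, by simp⟩
    intro q hq
    simp only [List.mem_singleton] at hq
    subst hq
    exact ⟨List.isChain_nil, by simp⟩
  | succ n ih =>
    intro p hlen hp
    classical
    set noCyc : E → Prop := fun e => ∀ c : List E, IsCycle s r c → e ∉ c with hnoCyc
    set pu : E → Bool := fun e => decide (noCyc e) with hpu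
    set u := p.takeWhile pu with hu
    set v := p.dropWhile pu with hv
    have huv : u ++ v = p := List.takeWhile_append_dropWhile
    have hu_nc : ∀ e ∈ u, noCyc e := by
      intro e he
      rw [hu] at he
      have h2 := List.mem_takeWhile_imp he
      rw [hpu] at h2
      simpa using h2
    have hu_path : IsPath s r u := isPath_infix s r hp ⟨[], v, by simp [huv]⟩
    cases hv' : v with
    | nil =>
      have hpu' : p = u := by rw [← huv, hv', List.append_nil]
      refine ⟨[], [], [p], ⟨by simp, List.isChain_nil, by simp⟩, rfl, rfl, by simp, ?_, by simp, by simp⟩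
      intro q hq
      simp only [List.mem_singleton] at hq
      subst hq
      exact ⟨hp, fun e he => hu_nc e (by rw [← hpu']; exact he)⟩
    | cons e v' =>
      have hev : pu e = false := by
        have h := List.head?_dropWhile_not pu p
        rw [← hv, hv'] at h
        exact h
      obtain ⟨c, hc, hec⟩ : ∃ c, IsCycle s r c ∧ e ∈ c := by
        by_contra hcon
        have : noCyc e := fun c hcc hecc => hcon ⟨c, hcc, hecc⟩
        rw [hpu] at hev
        simp only [decide_eq_false_iff_not] at hev
        exact hev this
      set pcB : E → Bool := fun x => decide (x ∈ c) with hpc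
      set p₁ := v.takeWhile pcB with hp₁
      set rest := v.dropWhile pcB with hrest
      have hvp : p₁ ++ rest = v := List.takeWhile_append_dropWhile
      have hp₁c : ∀ x ∈ p₁, x ∈ c := by
        intro x hx
        rw [hp₁] at hx
        have h2 := List.mem_takeWhile_imp hx
        rw [hpc] at h2
        simpa using h2
      obtain ⟨p₁', hp₁'⟩ : ∃ p₁', p₁ = e :: p₁' := by
        rw [hp₁, hv', List.takeWhile_cons_of_pos (by rw [hpc]; exact decide_eq_true hec)]
        exact ⟨_, rfl⟩
      have hp₁ne : p₁ ≠ [] := by rw [hp₁']; simp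
      have hpeq : p = u ++ p₁ ++ rest := by rw [List.append_assoc, hvp, huv]
      have hrest_len : rest.length ≤ n := by
        have h1 : p.length = u.length + p₁.length + rest.length := by rw [hpeq]; simp [Nat.add_assoc]
        rw [hp₁'] at h1
        simp only [List.length_cons] at h1
        omega
      have hrest_path : IsPath s r rest := isPath_infix s r hp ⟨u ++ p₁, [], by rw [hpeq]; simp⟩
      obtain ⟨cs, ps, ps', hchain, hlps, hlps', hzip, hps', hflat, hinv⟩ :=
        ih rest hrest_len hrest_path
      -- the last edge of `p₁`
      obtain ⟨eL, heL⟩ := exists_getLast?_eq hp₁ne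
      have heLc : eL ∈ c := hp₁c eL (List.mem_of_getLast? heL)
      have hrv : r eL ∈ cycleVerts s c := range_mem_cycleVerts s r hc heLc
      have hvpath : IsPath s r (p₁ ++ rest) := by rw [hvp]; exact isPath_infix s r hp ⟨u, [], by rw [← huv]; simp⟩
      -- the key structure of the first edge of `rest`
      have hmain : ∀ c' ∈ cs, ∃ f q g, rest.head? = some f ∧ (q ++ [g]) <+: rest ∧
          q.head? = some f ∧ g ∈ c' ∧ EndsAt r q (s g) ∧ IsPath s r q ∧
          s f ∈ cycleVerts s c ∧ (∀ c'', IsCycle s r c'' → f ∉ c'') := by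
        intro c' hc'
        obtain ⟨q, g, hpre, hgc⟩ := hinv c' hc'
        obtain ⟨f, rest'', hrf⟩ : ∃ f rest'', rest = f :: rest'' := by
          cases hr : rest with
          | nil =>
            rw [hr] at hpre
            obtain ⟨t, ht⟩ := hpre
            exact absurd ht (by simp)
          | cons a b => exact ⟨a, b, rfl⟩
        have hfc : pcB f = false := by
          have h := List.head?_dropWhile_not pcB v
          rw [← hrest, hrf] at h
          exact h
        have hf_notc : f ∉ c := by
          intro hfc'
          rw [hpc] at hfc
          simp only [decide_eq_false_iff_not] at hfc
          exact hfc hfc'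
        have hsf_eq : r eL = s f := path_junction s r hvpath heL (by rw [hrf]; rfl)
        have hsf : s f ∈ cycleVerts s c := by rw [← hsf_eq]; exact hrv
        have hf_nc : ∀ c'', IsCycle s r c'' → f ∉ c'' := by
          intro c'' hc'' hfmem
          have hmem'' : s f ∈ cycleVerts s c'' := ⟨f, hfmem, rfl⟩
          have hsets := hsep c c'' hc hc'' ⟨s f, hsf, hmem''⟩
          exact hf_notc ((Set.ext_iff.mp hsets f).mpr hfmem)
        have hqne : q ≠ [] := by
          intro hq0
          subst hq0
          obtain ⟨t, ht⟩ := hpre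
          rw [hrf] at ht
          simp only [List.nil_append, List.cons_append, List.cons.injEq] at ht
          exact hf_nc c' (hchain.1 c' hc') (ht.1 ▸ hgc)
        obtain ⟨q₀, qt, hq0⟩ : ∃ q₀ qt, q = q₀ :: qt := by
          cases q with
          | nil => exact absurd rfl hqne
          | cons a b => exact ⟨a, b, rfl⟩
        have hq0f : q₀ = f := by
          obtain ⟨t, ht⟩ := hpre
          rw [hrf, hq0] at ht
          simp only [List.cons_append, List.cons.injEq] at ht
          exact ht.1
        refine ⟨f, q, g, by rw [hrf]; rfl, hpre, by rw [hq0, hq0f]; rfl, hgc,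
          endsAt_of_prefix s r hrest_path hpre hqne,
          isPath_infix s r hrest_path ((List.prefix_append q [g]).trans hpre).isInfix,
          hsf, hf_nc⟩
      -- the chain connection from `c` to each cycle of `cs`
      have hconn : ∀ c' ∈ cs, CycleConnects s r c c' := by
        intro c' hc'
        obtain ⟨f, q, g, hhead, hpre, hqhead, hgc, hend, hqpath, hsf, hf_nc⟩ := hmain c' hc'
        refine ⟨s f, s g, hsf, ⟨g, hgc, rfl⟩, Or.inr ⟨q, ?_, hqpath, ⟨f, hqhead, rfl⟩, hend⟩⟩
        intro hq0
        rw [hq0] at hqhead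
        simp at hqhead
      -- `c` is distinct (as an edge set) from every cycle of `cs`
      have hne : ∀ c' ∈ cs, {x | x ∈ c} ≠ {x | x ∈ c'} := by
        intro c' hc' hEq
        obtain ⟨f, q, g, hhead, hpre, hqhead, hgc, hend, hqpath, hsf, hf_nc⟩ := hmain c' hc'
        have hgC : g ∈ c := (Set.ext_iff.mp hEq g).mpr hgc
        have hsgC : s g ∈ cycleVerts s c := ⟨g, hgC, rfl⟩
        obtain ⟨q₀, qt, rfl⟩ : ∃ q₀ qt, q = q₀ :: qt := by
          cases q with
          | nil => exact absurd hqhead (by simp)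
          | cons a b => exact ⟨a, b, rfl⟩
        have hq0f : q₀ = f := Option.some_inj.mp hqhead
        subst hq0f
        rcases cycle_path_between s r hc hsgC hsf with hvw | ⟨t, htne, htpath, htstart, htend⟩
        · -- `q` itself is a closed walk through `f`
          have hend' : EndsAt r (q₀ :: qt) (s q₀) := by rw [← hvw]; exact hend
          obtain ⟨cyc, hcyc, hfcyc⟩ :=
            closed_walk_cycle s r qt.length q₀ qt le_rfl hqpath hend'
          exact hf_nc cyc hcyc hfcyc
        · -- `q ++ t` is a closed walk through `f`
          have hpath2 : IsPath s r ((q₀ :: qt) ++ t) := by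
            rw [IsPath, List.Chain', List.isChain_append]
            refine ⟨hqpath, htpath, ?_⟩
            intro z hz w hw
            obtain ⟨zq, hzq, hzr⟩ := hend
            have hz' : z = zq := by rw [hzq] at hz; exact (Option.mem_some_iff.mp hz).symm
            obtain ⟨w0, hw0, hw0s⟩ := htstart
            have hw' : w = w0 := by rw [hw0] at hw; exact (Option.mem_some_iff.mp hw).symm
            rw [hz', hw', hzr, hw0s]
          have hend2 : EndsAt r ((q₀ :: qt) ++ t) (s q₀) := endsAt_append_right r htend
          obtain ⟨cyc, hcyc, hfcyc⟩ := closed_walk_cycle s r (qt ++ t).length q₀ (qt ++ t)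
            le_rfl (by simpa using hpath2) (by simpa using hend2)
          exact hf_nc cyc hcyc hfcyc
      -- assemble
      refine ⟨c :: cs, p₁ :: ps, u :: ps', ⟨?_, ?_, ?_⟩, ?_, ?_, ?_, ?_, ?_, ?_⟩
      · intro c₀ h
        rcases List.mem_cons.mp h with rfl | h
        · exact hc
        · exact hchain.1 c₀ h
      · exact List.isChain_cons.mpr
          ⟨fun c₀ h => hconn c₀ (List.mem_of_mem_head? h), hchain.2.1⟩
      · exact List.pairwise_cons.mpr ⟨hne, hchain.2.2⟩
      · simp [hlps]
      · simp [hlps']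
      · intro pc hpc'
        rcases List.mem_cons.mp hpc' with h | h
        · rw [h]
          exact ⟨isPath_infix s r hp ⟨u, rest, by rw [hpeq]⟩, hp₁c⟩
        · exact hzip pc h
      · intro q hq
        rcases List.mem_cons.mp hq with rfl | h
        · exact ⟨hu_path, fun e' he' => hu_nc e' he'⟩
        · exact hps' q h
      · rw [hpeq]
        simp only [List.cons_append, List.zipWith_cons_cons, List.flatten_cons]
        rw [← hflat]
      · intro c₀ h
        rcases List.mem_cons.mp h with rfl | h
        · exact ⟨u, e, ⟨p₁' ++ rest, by rw [hpeq, hp₁']; simp⟩, hec⟩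
        · obtain ⟨q, g, ⟨t, ht⟩, hg⟩ := hinv c₀ h
          exact ⟨u ++ p₁ ++ q, g, ⟨t, by rw [hpeq, ← ht]; simp⟩, hg⟩

/-- from the proof of Theorem 2.  In a finite graph in which
distinct cycles have no common vertex, every path `p` decomposes as
`p = p₁' p₁ p₂' p₂ ⋯ p_k p_{k+1}'` along a chain of cycles `C₁ ⟹ ⋯ ⟹ C_k`
(possibly `k = 0`), where each `pᵢ` is a (possibly empty) path on the cycle `Cᵢ` and
each `pᵢ'` is a (possibly empty) path none of whose edges lies on a cycle. -/
theorem path_decomposition_along_chain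
    [Fintype V] [Fintype E] (hsep : SeparatedCycles s r)
    (p : List E) (hp : IsPath s r p) :
    ∃ cs ps ps' : List (List E),
      IsChainOfCycles s r cs ∧
      ps.length = cs.length ∧
      ps'.length = cs.length + 1 ∧
      (∀ pc ∈ List.zip ps cs, IsPath s r pc.1 ∧ ∀ e ∈ pc.1, e ∈ pc.2) ∧
      (∀ q ∈ ps', IsPath s r q ∧ ∀ e ∈ q, ∀ c : List E, IsCycle s r c → e ∉ c) ∧
      p = (List.zipWith (· ++ ·) ps' (ps ++ [[]])).flatten := by
  obtain ⟨cs, ps, ps', h1, h2, h3, h4, h5, h6, _⟩ :=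
    decomp_aux s r hsep p.length p le_rfl hp
  exact ⟨cs, ps, ps', h1, h2, h3, h4, h5, h6⟩

end LeavittSetup
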